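/- Let f : D → {0,1} be a partial Boolean function with D ⊆ {0,1}^M, let ε ∈ [0,1/2), and let d ≥ 0 be an integer. The positive one-sided ε-approximate degree of f exceeds d if and only if there exists a function ψ : {0,1}^M → ℝ such that: (1) ψ(x) = 0 for every x ∉ D; (2) ψ has pure high degree d; (3) ‖ψ‖₁ = 1; (4) ∑_{x∈D} ψ(x)f(x) > ε; and (5) ψ(x) ≤ 0 whenever f(x) = 0. -/

import Mathlib

open MvPolynomial
open scoped Classical

noncomputable section

/-- The real value of a Boolean: `1` for `true`, `0` for `false`. -/
def bval (b : Bool) : ℝ := if b then 1 else 0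

/-- Evaluation of a real multilinear polynomial at a Boolean point of `{0,1}^σ`. -/
def pEval {σ : Type*} (p : MvPolynomial σ ℝ) (x : σ → Bool) : ℝ :=
  MvPolynomial.eval (fun i => bval (x i)) p

/-- `p` is a positive one-sided `ε`-approximation of the partial Boolean function `f`
with domain `D`. -/
def OneSidedApproxBy {σ : Type*} (D : Set (σ → Bool)) (f : (σ → Bool) → Bool) (ε : ℝ)
    (p : MvPolynomial σ ℝ) : Prop :=
  (∀ x ∈ D, f x = true → |pEval p x - 1| ≤ ε) ∧ ∀ x ∈ D, f x = false → pEval p x ≤ ε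

/-- The positive one-sided `ε`-approximate degree of the partial Boolean function `f`. -/
noncomputable def odeg {σ : Type*} (D : Set (σ → Bool)) (f : (σ → Bool) → Bool) (ε : ℝ) : ℕ :=
  sInf {d | ∃ p : MvPolynomial σ ℝ, OneSidedApproxBy D f ε p ∧ p.totalDegree = d}

/-- `ψ` has pure high degree `d`: it is orthogonal to every polynomial of degree at most `d`. -/
def PureHighDeg {σ : Type*} [Fintype σ] [DecidableEq σ] (d : ℕ)
    (ψ : (σ → Bool) → ℝ) : Prop :=
  ∀ p : MvPolynomial σ ℝ, p.totalDegree ≤ d → ∑ x : σ → Bool, ψ x * pEval p x = 0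

/-! ### Auxiliary material -/

open scoped RealInnerProductSpace

section Farkas
variable {κ ι : Type*} [Fintype κ] [Fintype ι]

def coneSet (v : ι → EuclideanSpace ℝ κ) : Set (EuclideanSpace ℝ κ) :=
  {x | ∃ t : ι → ℝ, (∀ i, 0 ≤ t i) ∧ ∑ i, t i • v i = x}

lemma sum_smul_apply (v : ι → EuclideanSpace ℝ κ) (t : ι → ℝ) (r : κ) :
    (∑ i, t i • v i) r = ∑ i, t i * v i r := by
  rw [show ((∑ i, t i • v i) r) = (∑ i, t i • v i : κ → ℝ) r by simp [WithLp.ofLp_sum]]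
  rw [Finset.sum_apply]
  rfl

lemma inner_eq (u w : EuclideanSpace ℝ κ) : ⟪u, w⟫ = ∑ r, u r * w r := by
  simp [PiLp.inner_apply, RCLike.inner_apply, conj_trivial, mul_comm]

set_option linter.unusedSectionVars false in
lemma exists_erase (v : ι → EuclideanSpace ℝ κ) (s : Finset ι)
    (hdep : ¬ LinearIndependent ℝ (fun i : s => v i)) (t : ι → ℝ) (ht : ∀ i, 0 ≤ t i) :
    ∃ i₀ ∈ s, ∃ t' : ι → ℝ, (∀ i, 0 ≤ t' i) ∧
      ∑ i ∈ s.erase i₀, t' i • v i = ∑ i ∈ s, t i • v i := by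
  obtain ⟨g, hgsum, i, hgi⟩ := Fintype.not_linearIndependent_iff.mp hdep
  obtain ⟨g, hgsum, i, hgi⟩ : ∃ g : s → ℝ, (∑ j : s, g j • v j = 0) ∧ ∃ i : s, 0 < g i := by
    rcases lt_trichotomy (g i) 0 with h | h | h
    · exact ⟨-g, by simpa [neg_smul] using congrArg Neg.neg hgsum, i, by simpa using h⟩
    · exact absurd h hgi
    · exact ⟨g, hgsum, i, h⟩
  set G : ι → ℝ := fun j => if h : j ∈ s then g ⟨j, h⟩ else 0 with hG
  have hGsum : ∑ j ∈ s, G j • v j = 0 := by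
    rw [← Finset.sum_coe_sort s (fun j => G j • v j)]
    rw [← hgsum]
    exact Finset.sum_congr rfl fun j _ => by simp [hG, j.2]
  have hP : (i : ι) ∈ s.filter (fun j => 0 < G j) := by
    simp only [Finset.mem_filter]
    exact ⟨i.2, by simpa [hG, i.2] using hgi⟩
  obtain ⟨i₀, hi₀P, hmin⟩ :=
    (s.filter (fun j => 0 < G j)).exists_min_image (fun j => t j / G j) ⟨i, hP⟩
  have hi₀s : i₀ ∈ s := (Finset.mem_filter.mp hi₀P).1
  have hGi₀ : 0 < G i₀ := (Finset.mem_filter.mp hi₀P).2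
  set r : ℝ := t i₀ / G i₀ with hr
  have hr0 : 0 ≤ r := div_nonneg (ht i₀) hGi₀.le
  set t' : ι → ℝ := fun j => if j ∈ s then t j - r * G j else 0 with ht'
  have ht'0 : ∀ j, 0 ≤ t' j := by
    intro j
    by_cases hjs : j ∈ s
    · simp only [ht', if_pos hjs, sub_nonneg]
      by_cases hGj : 0 < G j
      · have := hmin j (Finset.mem_filter.mpr ⟨hjs, hGj⟩)
        calc r * G j ≤ t j / G j * G j := by
              exact mul_le_mul_of_nonneg_right this hGj.le
          _ = t j := div_mul_cancel₀ _ hGj.ne'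
      · exact le_trans (mul_nonpos_of_nonneg_of_nonpos hr0 (not_lt.mp hGj)) (ht j)
    · simp [ht', hjs]
  refine ⟨i₀, hi₀s, t', ht'0, ?_⟩
  have ht'i₀ : t' i₀ = 0 := by
    simp [ht', hi₀s, hr, div_mul_cancel₀ _ hGi₀.ne']
  rw [Finset.sum_erase _ (by rw [ht'i₀, zero_smul])]
  have : ∀ j ∈ s, t' j • v j = t j • v j - r • (G j • v j) := by
    intro j hj
    simp only [ht', if_pos hj, sub_smul, smul_smul]
  rw [Finset.sum_congr rfl this, Finset.sum_sub_distrib, ← Finset.smul_sum, hGsum, smul_zero,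
    sub_zero]

lemma carat (v : ι → EuclideanSpace ℝ κ) (s : Finset ι) :
    ∀ t : ι → ℝ, (∀ i, 0 ≤ t i) →
    ∃ s' : Finset ι, (LinearIndependent ℝ (fun i : s' => v i)) ∧
      ∃ t' : ι → ℝ, (∀ i, 0 ≤ t' i) ∧ ∑ i ∈ s', t' i • v i = ∑ i ∈ s, t i • v i := by
  induction s using Finset.strongInduction with
  | _ s ih =>
    intro t ht
    by_cases h : LinearIndependent ℝ (fun i : s => v i)
    · exact ⟨s, h, t, ht, rfl⟩
    · obtain ⟨i₀, hi₀, t', ht', hsum⟩ := exists_erase v s h t ht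
      obtain ⟨s', hs', t'', ht'', hsum'⟩ := ih (s.erase i₀) (Finset.erase_ssubset hi₀) t' ht'
      exact ⟨s', hs', t'', ht'', by rw [hsum', hsum]⟩

lemma coneSet_closed (v : ι → EuclideanSpace ℝ κ) : IsClosed (coneSet v) := by
  have hrw : coneSet v = ⋃ (s : Finset ι), ⋃ (_ : LinearIndependent ℝ (fun i : s => v i)),
      (fun t : s → ℝ => ∑ i, t i • v i) '' {t | ∀ i, 0 ≤ t i} := by
    ext x
    constructor
    · rintro ⟨t, ht, rfl⟩
      obtain ⟨s', hli, t', ht', hsum⟩ := carat v Finset.univ t ht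
      refine Set.mem_iUnion.mpr ⟨s', Set.mem_iUnion.mpr ⟨hli, ?_⟩⟩
      refine ⟨fun i => t' i, fun i => ht' i, ?_⟩
      dsimp only
      rw [Finset.sum_coe_sort s' (fun i => t' i • v i)]
      exact hsum
    · intro hx
      obtain ⟨s, hli, ⟨t, ht, rfl⟩⟩ := by simpa using hx
      refine ⟨fun j => if h : j ∈ s then t ⟨j, h⟩ else 0,
        fun j => by by_cases h : j ∈ s <;> simp [h, ht _], ?_⟩
      dsimp only
      rw [show (∑ x ∈ s.attach, t x • v ↑x)
          = ∑ x ∈ s.attach, (fun j => if h : j ∈ s then t ⟨j, h⟩ else 0) (↑x) • v ↑x from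
        Finset.sum_congr rfl fun x _ => by simp]
      rw [Finset.sum_attach s (fun j => (fun j => if h : j ∈ s then t ⟨j, h⟩ else 0) j • v j)]
      exact (Finset.sum_subset (Finset.subset_univ s) (fun j _ hj => by simp [hj])).symm
  rw [hrw]
  refine isClosed_iUnion_of_finite fun s => isClosed_iUnion_of_finite fun hli => ?_
  have h := (Fintype.linearIndependent_iff' (v := fun i : s => v i)).mp hli
  have hce := LinearMap.isClosedEmbedding_of_injective (𝕜 := ℝ) h
  have hcl : IsClosed {t : s → ℝ | ∀ i, 0 ≤ t i} := by
    have : {t : s → ℝ | ∀ i, 0 ≤ t i} = ⋂ i, {t : s → ℝ | 0 ≤ t i} := by ext t; simp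
    rw [this]
    exact isClosed_iInter (fun i => isClosed_le continuous_const (continuous_apply i))
  have := hce.isClosedMap _ hcl
  convert this using 2
  ext t
  simp [LinearMap.lsum_apply]

lemma farkas (v : ι → EuclideanSpace ℝ κ) (b : EuclideanSpace ℝ κ)
    (hb : b ∉ coneSet v) : ∃ y, (∀ i, 0 ≤ ⟪v i, y⟫) ∧ ⟪y, b⟫ < 0 := by
  set K : ProperCone ℝ (EuclideanSpace ℝ κ) :=
    { carrier := coneSet v
      zero_mem' := ⟨fun _ => 0, fun _ => le_refl _, by simp⟩
      isClosed' := coneSet_closed v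
      smul_mem' := by
        rintro c x ⟨t, ht, rfl⟩
        exact ⟨fun i => (c : ℝ) * t i, fun i => mul_nonneg c.2 (ht i),
          by change _ = (c : ℝ) • (∑ i, t i • v i : EuclideanSpace ℝ κ)
             rw [Finset.smul_sum]
             exact Finset.sum_congr rfl fun i _ => (smul_smul (c : ℝ) (t i) (v i)).symm⟩
      add_mem' := by
        rintro _ _ ⟨t, ht, rfl⟩ ⟨u, hu, rfl⟩
        exact ⟨fun i => t i + u i, fun i => add_nonneg (ht i) (hu i),
          by rw [← Finset.sum_add_distrib]
             exact Finset.sum_congr rfl fun i _ => by rw [add_smul]⟩ }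
  have hne : (K : Set (EuclideanSpace ℝ κ)).Nonempty :=
    ⟨0, ⟨fun _ => 0, fun _ => le_refl _, by simp⟩⟩
  obtain ⟨y, hy1, hy2⟩ :=
    ProperCone.hyperplane_separation' K hb
  refine ⟨y, fun i => ?_, by rw [real_inner_comm]; exact hy2⟩
  apply hy1
  exact ⟨fun j => if j = i then 1 else 0, fun j => by positivity, by simp⟩

end Farkas

section PolyAux
variable {M : ℕ}

def chi (S : Finset (Fin M)) (x : Fin M → Bool) : ℝ := ∏ i ∈ S, bval (x i)

def monS (S : Finset (Fin M)) : MvPolynomial (Fin M) ℝ := ∏ i ∈ S, X i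

lemma pEval_monS (S : Finset (Fin M)) (x : Fin M → Bool) : pEval (monS S) x = chi S x := by
  simp [pEval, monS, chi, map_prod]

lemma totalDegree_monS (S : Finset (Fin M)) : (monS S).totalDegree ≤ S.card := by
  refine le_trans (totalDegree_finset_prod S _) ?_
  simp [totalDegree_X]

lemma bval_pow (b : Bool) (k : ℕ) (hk : k ≠ 0) : bval b ^ k = bval b := by
  cases b <;> simp [bval, zero_pow hk]

lemma pEval_eq_sum_chi (p : MvPolynomial (Fin M) ℝ) (x : Fin M → Bool) :
    pEval p x = ∑ m ∈ p.support, p.coeff m * chi m.support x := by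
  rw [pEval, eval_eq]
  refine Finset.sum_congr rfl fun m _ => ?_
  congr 1
  refine Finset.prod_congr rfl fun i hi => ?_
  exact bval_pow _ _ (Finsupp.mem_support_iff.mp hi)

lemma card_support_le_totalDegree {p : MvPolynomial (Fin M) ℝ} {m : Fin M →₀ ℕ}
    (hm : m ∈ p.support) : m.support.card ≤ p.totalDegree := by
  refine le_trans ?_ (le_totalDegree hm)
  rw [Finsupp.sum]
  calc m.support.card = ∑ _i ∈ m.support, 1 := by simp
    _ ≤ ∑ i ∈ m.support, m i :=
      Finset.sum_le_sum fun i hi => Nat.one_le_iff_ne_zero.mpr (Finsupp.mem_support_iff.mp hi)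

lemma phd_of_chi (d : ℕ) (ψ : (Fin M → Bool) → ℝ)
    (h : ∀ S : Finset (Fin M), S.card ≤ d → ∑ x, ψ x * chi S x = 0) : PureHighDeg d ψ := by
  intro p hp
  have : ∀ x, ψ x * pEval p x = ∑ m ∈ p.support, p.coeff m * (ψ x * chi m.support x) := by
    intro x
    rw [pEval_eq_sum_chi, Finset.mul_sum]
    exact Finset.sum_congr rfl fun m _ => by ring
  simp_rw [this]
  rw [Finset.sum_comm]
  refine Finset.sum_eq_zero fun m hm => ?_
  rw [← Finset.mul_sum, h m.support (le_trans (card_support_le_totalDegree hm) hp), mul_zero]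

def deltaP (z : Fin M → Bool) : MvPolynomial (Fin M) ℝ :=
  ∏ i, (if z i then X i else 1 - X i)

lemma pEval_deltaP (z x : Fin M → Bool) : pEval (deltaP z) x = if x = z then 1 else 0 := by
  rw [deltaP, pEval, map_prod]
  have : ∀ i, (MvPolynomial.eval fun i => bval (x i)) (if z i then X i else 1 - X i)
      = if x i = z i then 1 else 0 := by
    intro i
    cases hz : z i <;> cases hx : x i <;> simp [bval, hz, hx]
  simp_rw [this]
  rw [Finset.prod_boole]
  congr 1
  simp [funext_iff]

lemma exists_exact (g : (Fin M → Bool) → ℝ) :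
    ∃ p : MvPolynomial (Fin M) ℝ, ∀ x, pEval p x = g x := by
  refine ⟨∑ z, g z • deltaP z, fun x => ?_⟩
  rw [pEval, map_sum]
  have : ∀ z, (MvPolynomial.eval fun i => bval (x i)) (g z • deltaP z)
      = g z * (if x = z then 1 else 0) := by
    intro z
    rw [smul_eval]
    rw [← pEval_deltaP z x]
    rfl
  simp_rw [this, mul_ite, mul_one, mul_zero]
  simp

end PolyAux

section Hard
variable {M : ℕ} (D : Set (Fin M → Bool)) (f : (Fin M → Bool) → Bool) (ε : ℝ) (d : ℕ)

/-- Row index type: upper rows `inl x` (q x ≤ ...) and lower rows `inr x` (−q x ≤ ...). -/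
abbrev Rows (M : ℕ) := (Fin M → Bool) ⊕ (Fin M → Bool)

/-- Generator index type. -/
abbrev Gidx (M : ℕ) := (Finset (Fin M) × Bool) ⊕ (Rows M × Bool)

/-- A row is "free" if it carries no actual constraint. -/
def freeRow : Rows M → Prop :=
  Sum.elim (fun x => x ∉ D) (fun x => ¬(x ∈ D ∧ f x = true))

def rowA (S : Finset (Fin M)) : Rows M → ℝ :=
  Sum.elim (fun x => chi S x) (fun x => -chi S x)

def genF : Gidx M → Rows M → ℝ := fun i =>
  match i with
  | Sum.inl (S, true) => if S.card ≤ d then rowA S else 0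
  | Sum.inl (S, false) => if S.card ≤ d then (fun r => -(rowA S r)) else 0
  | Sum.inr (r₀, true) => fun r => if r = r₀ then 1 else 0
  | Sum.inr (r₀, false) =>
      if freeRow D f r₀ then (fun r => -(if r = r₀ then 1 else 0)) else 0

def gens : Gidx M → EuclideanSpace ℝ (Rows M) := fun i => WithLp.toLp 2 (genF D f d i)

def cvecF : Rows M → ℝ :=
  Sum.elim (fun x => if x ∈ D then (if f x = true then 1 + ε else ε) else 0)
    (fun x => if x ∈ D ∧ f x = true then -(1 - ε) else 0)

def cvec : EuclideanSpace ℝ (Rows M) := WithLp.toLp 2 (cvecF D f ε)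

lemma feasible_of_mem (hc : cvec D f ε ∈ coneSet (gens D f d)) :
    ∃ p : MvPolynomial (Fin M) ℝ, OneSidedApproxBy D f ε p ∧ p.totalDegree ≤ d := by
  obtain ⟨t, ht, hsum⟩ := hc
  set p : MvPolynomial (Fin M) ℝ :=
    ∑ S : Finset (Fin M),
      (if S.card ≤ d then t (Sum.inl (S, true)) - t (Sum.inl (S, false)) else 0) • monS S
    with hp
  have hdeg : p.totalDegree ≤ d := by
    refine le_trans (totalDegree_finset_sum _ _) (Finset.sup_le fun S _ => ?_)
    by_cases hS : S.card ≤ d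
    · simp only [if_pos hS]
      exact le_trans (totalDegree_smul_le _ _) (le_trans (totalDegree_monS S) hS)
    · simp only [if_neg hS, zero_smul, totalDegree_zero]
      exact Nat.zero_le d
  have hQ : ∀ x, pEval p x =
      ∑ S : Finset (Fin M),
        (if S.card ≤ d then t (Sum.inl (S, true)) - t (Sum.inl (S, false)) else 0) * chi S x := by
    intro x
    rw [hp, pEval, map_sum]
    refine Finset.sum_congr rfl fun S _ => ?_
    rw [smul_eval, ← pEval_monS S x]
    rfl
  -- the row identity
  have hrow : ∀ r : Rows M,
      Sum.elim (fun x => pEval p x) (fun x => -pEval p x) r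
        + (t (Sum.inr (r, true))
            - (if freeRow D f r then t (Sum.inr (r, false)) else 0)) = cvecF D f ε r := by
    intro r
    have hr : (∑ i, t i • gens D f d i) r = cvec D f ε r := by rw [hsum]
    rw [sum_smul_apply] at hr
    rw [Fintype.sum_sum_type] at hr
    have h1 : ∑ a : Finset (Fin M) × Bool, t (Sum.inl a) * gens D f d (Sum.inl a) r
        = Sum.elim (fun x => pEval p x) (fun x => -pEval p x) r := by
      rw [Fintype.sum_prod_type]
      have : ∀ S : Finset (Fin M), ∑ b, t (Sum.inl (S, b)) * gens D f d (Sum.inl (S, b)) r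
          = (if S.card ≤ d then t (Sum.inl (S, true)) - t (Sum.inl (S, false)) else 0)
              * rowA S r := by
        intro S
        rw [Fintype.sum_bool]
        show t (Sum.inl (S, true)) * genF D f d (Sum.inl (S, true)) r
            + t (Sum.inl (S, false)) * genF D f d (Sum.inl (S, false)) r = _
        by_cases hS : S.card ≤ d
        · simp only [genF, if_pos hS]
          ring
        · simp only [genF, if_neg hS, Pi.zero_apply, mul_zero, add_zero, zero_mul]
      rw [Finset.sum_congr rfl fun S _ => this S]
      cases r with
      | inl x =>
        simp only [Sum.elim_inl, hQ x]
        exact Finset.sum_congr rfl fun S _ => by simp [rowA]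
      | inr x =>
        simp only [Sum.elim_inr, hQ x, ← Finset.sum_neg_distrib]
        refine Finset.sum_congr rfl fun S _ => ?_
        simp only [rowA, Sum.elim_inr]
        ring
    have h2 : ∑ a : Rows M × Bool, t (Sum.inr a) * gens D f d (Sum.inr a) r
        = t (Sum.inr (r, true)) - (if freeRow D f r then t (Sum.inr (r, false)) else 0) := by
      rw [Fintype.sum_prod_type]
      have : ∀ r₀ : Rows M, ∑ b, t (Sum.inr (r₀, b)) * gens D f d (Sum.inr (r₀, b)) r
          = if r = r₀ then
              t (Sum.inr (r₀, true)) - (if freeRow D f r₀ then t (Sum.inr (r₀, false)) else 0)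
            else 0 := by
        intro r₀
        rw [Fintype.sum_bool]
        show t (Sum.inr (r₀, true)) * genF D f d (Sum.inr (r₀, true)) r
            + t (Sum.inr (r₀, false)) * genF D f d (Sum.inr (r₀, false)) r = _
        by_cases hfree : freeRow D f r₀ <;> by_cases hrr : r = r₀ <;>
          simp [genF, hfree, hrr] <;> ring
      rw [Finset.sum_congr rfl fun r₀ _ => this r₀]
      rw [Finset.sum_ite_eq Finset.univ r
        (fun r₀ => t (Sum.inr (r₀, true))
          - (if freeRow D f r₀ then t (Sum.inr (r₀, false)) else 0))]
      simp
    rw [h1, h2] at hr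
    exact hr
  refine ⟨p, ⟨?_, ?_⟩, hdeg⟩
  · intro x hxD hfx
    have hup := hrow (Sum.inl x)
    have hlo := hrow (Sum.inr x)
    simp only [Sum.elim_inl, Sum.elim_inr] at hup hlo
    rw [show cvecF D f ε (Sum.inl x) = 1 + ε by simp [cvecF, hxD, hfx]] at hup
    rw [show cvecF D f ε (Sum.inr x) = -(1 - ε) by simp [cvecF, hxD, hfx]] at hlo
    rw [show (if freeRow D f (Sum.inl x) then t (Sum.inr (Sum.inl x, false)) else 0) = 0 by
      simp [freeRow, hxD]] at hup
    rw [show (if freeRow D f (Sum.inr x) then t (Sum.inr (Sum.inr x, false)) else 0) = 0 by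
      simp [freeRow, hxD, hfx]] at hlo
    have hs1 : 0 ≤ t (Sum.inr (Sum.inl x, true)) := ht _
    have hs2 : 0 ≤ t (Sum.inr (Sum.inr x, true)) := ht _
    rw [abs_le]
    constructor <;> linarith
  · intro x hxD hfx
    have hup := hrow (Sum.inl x)
    simp only [Sum.elim_inl] at hup
    rw [show cvecF D f ε (Sum.inl x) = ε by simp [cvecF, hxD, hfx]] at hup
    rw [show (if freeRow D f (Sum.inl x) then t (Sum.inr (Sum.inl x, false)) else 0) = 0 by
      simp [freeRow, hxD]] at hup
    have hs1 : 0 ≤ t (Sum.inr (Sum.inl x, true)) := ht _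
    linarith

end Hard

/-- Dual characterization of positive one-sided approximate degree. -/
theorem stmt6 (M : ℕ) (D : Set (Fin M → Bool)) (f : (Fin M → Bool) → Bool)
    (ε : ℝ) (hε0 : 0 ≤ ε) (hε1 : ε < 1/2) (d : ℕ) :
    d < odeg D f ε ↔
      ∃ ψ : (Fin M → Bool) → ℝ,
        (∀ x, x ∉ D → ψ x = 0) ∧
        PureHighDeg d ψ ∧
        (∑ x : Fin M → Bool, |ψ x|) = 1 ∧
        (∑ x : Fin M → Bool, (if x ∈ D then ψ x * bval (f x) else 0)) > ε ∧
        (∀ x ∈ D, f x = false → ψ x ≤ 0) := by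
  have hSne : {e | ∃ p : MvPolynomial (Fin M) ℝ, OneSidedApproxBy D f ε p ∧
      p.totalDegree = e}.Nonempty := by
    obtain ⟨p, hp⟩ := exists_exact (fun x => bval (f x))
    refine ⟨p.totalDegree, p, ⟨fun x _ hx => ?_, fun x _ hx => ?_⟩, rfl⟩
    · rw [hp x, hx]; simpa [bval] using hε0
    · rw [hp x, hx]; simpa [bval] using hε0
  constructor
  · intro h
    have hno : cvec D f ε ∉ coneSet (gens D f d) := by
      intro hc
      obtain ⟨p, happ, hdeg⟩ := feasible_of_mem D f ε d hc
      exact absurd h (not_lt.mpr (le_trans (Nat.sInf_le ⟨p, happ, rfl⟩) hdeg))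
    obtain ⟨y, hy1, hy2⟩ := farkas _ _ hno
    have hinner : ∀ i, ⟪gens D f d i, y⟫ = ∑ r, genF D f d i r * y r := fun i => inner_eq _ _
    have hys : ∀ r : Rows M, 0 ≤ y r := by
      intro r
      have h0 := hy1 (Sum.inr (r, true))
      rw [hinner] at h0
      rwa [show (∑ r', genF D f d (Sum.inr (r, true)) r' * y r') = y r by
        simp [genF, ite_mul, Finset.sum_ite_eq]] at h0
    have hfree0 : ∀ r : Rows M, freeRow D f r → y r = 0 := by
      intro r hr
      have h0 := hy1 (Sum.inr (r, false))
      rw [hinner] at h0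
      rw [show (∑ r', genF D f d (Sum.inr (r, false)) r' * y r') = -y r by
        simp [genF, hr, ite_mul, Finset.sum_ite_eq]] at h0
      exact le_antisymm (by linarith) (hys r)
    have hchiS : ∀ S : Finset (Fin M), S.card ≤ d →
        ∑ x, chi S x * (y (Sum.inl x) - y (Sum.inr x)) = 0 := by
      intro S hS
      have hpos := hy1 (Sum.inl (S, true))
      have hneg := hy1 (Sum.inl (S, false))
      rw [hinner] at hpos hneg
      have e1 : (∑ r, genF D f d (Sum.inl (S, true)) r * y r)
          = ∑ x, chi S x * (y (Sum.inl x) - y (Sum.inr x)) := by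
        simp only [genF, if_pos hS]
        rw [Fintype.sum_sum_type]
        simp only [rowA, Sum.elim_inl, Sum.elim_inr]
        rw [← Finset.sum_add_distrib]
        exact Finset.sum_congr rfl fun x _ => by ring
      have e2 : (∑ r, genF D f d (Sum.inl (S, false)) r * y r)
          = -(∑ r, genF D f d (Sum.inl (S, true)) r * y r) := by
        rw [← Finset.sum_neg_distrib]
        refine Finset.sum_congr rfl fun r _ => ?_
        simp only [genF, if_pos hS]
        ring
      rw [e1] at hpos
      rw [e2, e1] at hneg
      linarith
    have hyc : ∑ x, y (Sum.inl x) * cvecF D f ε (Sum.inl x)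
        + ∑ x, y (Sum.inr x) * cvecF D f ε (Sum.inr x) < 0 := by
      have h0 := hy2
      rw [inner_eq] at h0
      rw [Fintype.sum_sum_type] at h0
      exact h0
    set ψ₀ : (Fin M → Bool) → ℝ := fun x => y (Sum.inr x) - y (Sum.inl x) with hψ₀
    set W : (Fin M → Bool) → ℝ := fun x =>
      if x ∈ D ∧ f x = true then y (Sum.inl x) + y (Sum.inr x)
      else if x ∈ D then y (Sum.inl x) else 0 with hW
    set T : ℝ := ∑ x, (if x ∈ D then ψ₀ x * bval (f x) else 0) with hT
    set N : ℝ := ∑ x, |ψ₀ x| with hN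
    have hterm : ∀ x, y (Sum.inl x) * cvecF D f ε (Sum.inl x)
        + y (Sum.inr x) * cvecF D f ε (Sum.inr x)
        = -(if x ∈ D then ψ₀ x * bval (f x) else 0) + ε * W x := by
      intro x
      by_cases hxD : x ∈ D
      · cases hfx : f x with
        | true =>
          rw [show cvecF D f ε (Sum.inl x) = 1 + ε by simp [cvecF, hxD, hfx],
            show cvecF D f ε (Sum.inr x) = -(1 - ε) by simp [cvecF, hxD, hfx],
            show W x = y (Sum.inl x) + y (Sum.inr x) by simp [hW, hxD, hfx],
            show (if x ∈ D then ψ₀ x * bval true else 0) = ψ₀ x by simp [hxD, bval]]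
          simp only [hψ₀]
          ring
        | false =>
          rw [show cvecF D f ε (Sum.inl x) = ε by simp [cvecF, hxD, hfx],
            show cvecF D f ε (Sum.inr x) = 0 by simp [cvecF, hfx],
            show W x = y (Sum.inl x) by simp [hW, hxD, hfx],
            show (if x ∈ D then ψ₀ x * bval false else 0) = 0 by simp [hxD, bval]]
          ring
      · rw [show cvecF D f ε (Sum.inl x) = 0 by simp [cvecF, hxD],
          show cvecF D f ε (Sum.inr x) = 0 by simp [cvecF, hxD],
          show W x = 0 by simp [hW, hxD],
          show (if x ∈ D then ψ₀ x * bval (f x) else 0) = 0 by simp [hxD]]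
        ring
    have h3 : -T + ε * (∑ x, W x) < 0 := by
      have e : ∑ x, (-(if x ∈ D then ψ₀ x * bval (f x) else 0) + ε * W x)
          = ∑ x, y (Sum.inl x) * cvecF D f ε (Sum.inl x)
            + ∑ x, y (Sum.inr x) * cvecF D f ε (Sum.inr x) := by
        rw [← Finset.sum_add_distrib]
        exact Finset.sum_congr rfl fun x _ => (hterm x).symm
      have e2 : ∑ x, (-(if x ∈ D then ψ₀ x * bval (f x) else 0) + ε * W x)
          = -T + ε * (∑ x, W x) := by
        rw [Finset.sum_add_distrib, Finset.sum_neg_distrib, ← Finset.mul_sum, hT]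
      rw [← e2]
      rw [e]
      exact hyc
    have habs : ∀ x, |ψ₀ x| ≤ W x := by
      intro x
      by_cases hxD : x ∈ D
      · by_cases hfx : f x = true
        · rw [show W x = y (Sum.inl x) + y (Sum.inr x) by simp [hW, hxD, hfx]]
          have h1 := hys (Sum.inl x)
          have h2 := hys (Sum.inr x)
          rw [abs_le]
          constructor <;> simp only [hψ₀] <;> linarith
        · have h2 : y (Sum.inr x) = 0 := hfree0 _ (by simp [freeRow, hfx])
          rw [show W x = y (Sum.inl x) by simp [hW, hxD, hfx]]
          simp only [hψ₀, h2, zero_sub, abs_neg]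
          exact le_of_eq (abs_of_nonneg (hys _))
      · have h1 : y (Sum.inl x) = 0 := hfree0 _ (by simp [freeRow, hxD])
        have h2 : y (Sum.inr x) = 0 := hfree0 _ (by simp [freeRow, hxD])
        rw [show W x = 0 by simp [hW, hxD]]
        simp [hψ₀, h1, h2]
    have hT' : ε * N < T := by
      have := mul_le_mul_of_nonneg_left (Finset.sum_le_sum (s := Finset.univ) fun x _ => habs x) hε0
      rw [← hN] at this
      linarith
    have hTpos : 0 < T := lt_of_le_of_lt (mul_nonneg hε0 (by
      rw [hN]; exact Finset.sum_nonneg fun x _ => abs_nonneg _)) hT'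
    have hTN : T ≤ N := by
      rw [hT, hN]
      refine Finset.sum_le_sum fun x _ => ?_
      by_cases hxD : x ∈ D
      · rw [if_pos hxD]
        cases hfx : f x with
        | true => simpa [bval] using le_abs_self (ψ₀ x)
        | false => simp [bval]
      · simp [hxD]
    have hNpos : 0 < N := lt_of_lt_of_le hTpos hTN
    refine ⟨fun x => ψ₀ x / N, ?_, ?_, ?_, ?_, ?_⟩
    · intro x hxD
      have h1 : y (Sum.inl x) = 0 := hfree0 _ (by simp [freeRow, hxD])
      have h2 : y (Sum.inr x) = 0 := hfree0 _ (by simp [freeRow, hxD])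
      simp [hψ₀, h1, h2]
    · refine phd_of_chi d _ fun S hS => ?_
      have e : ∑ x, ψ₀ x / N * chi S x
          = (∑ x, chi S x * (y (Sum.inl x) - y (Sum.inr x))) * (-1 / N) := by
        rw [Finset.sum_mul]
        refine Finset.sum_congr rfl fun x _ => ?_
        simp only [hψ₀]
        ring
      rw [e, hchiS S hS, zero_mul]
    · have e : ∀ x : Fin M → Bool, |ψ₀ x / N| = |ψ₀ x| / N := fun x => by
        rw [abs_div, abs_of_pos hNpos]
      rw [Finset.sum_congr rfl fun x _ => e x, ← Finset.sum_div, ← hN, div_self hNpos.ne']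
    · have e : ∀ x : Fin M → Bool, (if x ∈ D then ψ₀ x / N * bval (f x) else 0)
          = (if x ∈ D then ψ₀ x * bval (f x) else 0) / N := by
        intro x
        by_cases hxD : x ∈ D
        · rw [if_pos hxD, if_pos hxD, div_mul_eq_mul_div]
        · rw [if_neg hxD, if_neg hxD, zero_div]
      rw [Finset.sum_congr rfl fun x _ => e x, ← Finset.sum_div, ← hT]
      exact (lt_div_iff₀ hNpos).mpr hT'
    · intro x hxD hfx
      have h2 : y (Sum.inr x) = 0 := hfree0 _ (by simp [freeRow, hfx])
      have h1 := hys (Sum.inl x)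
      have hle : ψ₀ x ≤ 0 := by
        simp only [hψ₀, h2, zero_sub]
        linarith
      exact div_nonpos_of_nonpos_of_nonneg hle hNpos.le
  · rintro ⟨ψ, hsupp, hphd, hnorm, hcorr, hsign⟩
    by_contra hlt
    push_neg at hlt
    have hmem := Nat.sInf_mem hSne
    obtain ⟨p, happ, hdeg⟩ := hmem
    have hdle : p.totalDegree ≤ d := le_trans (le_of_eq hdeg) hlt
    have h0 : ∑ x, ψ x * pEval p x = 0 := hphd p hdle
    have hbound : ∀ x : Fin M → Bool,
        (if x ∈ D then ψ x * bval (f x) else 0) - ε * |ψ x| ≤ ψ x * pEval p x := by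
      intro x
      by_cases hxD : x ∈ D
      · cases hf : f x with
        | true =>
          have h1 : |pEval p x - 1| ≤ ε := happ.1 x hxD hf
          have : ψ x * pEval p x - ψ x * 1 = ψ x * (pEval p x - 1) := by ring
          have h2 : -(ε * |ψ x|) ≤ ψ x * (pEval p x - 1) := by
            calc -(ε * |ψ x|) ≤ -|ψ x * (pEval p x - 1)| := by
                  rw [abs_mul]
                  have := mul_le_mul_of_nonneg_left h1 (abs_nonneg (ψ x))
                  linarith
              _ ≤ ψ x * (pEval p x - 1) := neg_abs_le _
          have he : (if x ∈ D then ψ x * bval true else 0) = ψ x := by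
            simp [hxD, bval]
          rw [he]
          nlinarith [h2]
        | false =>
          have h1 : pEval p x ≤ ε := happ.2 x hxD hf
          have h2 : ψ x ≤ 0 := hsign x hxD hf
          have h3 : ψ x * ε ≤ ψ x * pEval p x := mul_le_mul_of_nonpos_left h1 h2
          have h4 : -|ψ x| ≤ ψ x := neg_abs_le _
          have he : (if x ∈ D then ψ x * bval false else 0) = 0 := by
            simp [hxD, bval]
          rw [he]
          nlinarith
      · rw [hsupp x hxD]
        simp [hxD]
    have hsum := Finset.sum_le_sum (s := Finset.univ) (fun x _ => hbound x)
    rw [h0] at hsum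
    rw [Finset.sum_sub_distrib, ← Finset.mul_sum, hnorm, mul_one] at hsum
    linarith
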